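/- Let f(t) = (2 + 4t²)π²/(t²+1)². Then f'(0) = 0, f''(0) = 0, f'''(0) = 0, and f''''(0) = -48π² < 0. In particular, f has a local maximum at t = 0. -/

import Mathlib

open Real

private lemma hb (t : ℝ) : HasDerivAt (fun t : ℝ => t ^ 2 + 1) (2 * t) t := by
  simpa using (hasDerivAt_pow 2 t).add_const 1

/-- The bienergy of the variation `Φ_t = (Φ + t V_ν)/√(1+t²)` of the proper
biharmonic Clifford torus in `S⁴` is `f(t) = π²(2+4t²)/(t²+1)²`.  Its first,
second and third derivatives vanish at `0`, the fourth derivative equals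
`-48π² < 0`, and `f` has a local maximum at `t = 0`. -/
theorem bienergy_variation_derivatives
    (f : ℝ → ℝ) (hf : ∀ t, f t = π ^ 2 * (2 + 4 * t ^ 2) / (t ^ 2 + 1) ^ 2) :
    iteratedDeriv 1 f 0 = 0 ∧ iteratedDeriv 2 f 0 = 0 ∧ iteratedDeriv 3 f 0 = 0 ∧
      iteratedDeriv 4 f 0 = -48 * π ^ 2 ∧ -48 * π ^ 2 < 0 ∧ IsLocalMax f 0 := by
  have hfe : f = fun t => π ^ 2 * (2 + 4 * t ^ 2) / (t ^ 2 + 1) ^ 2 := funext hf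
  subst hfe
  set g1 : ℝ → ℝ := fun t => π ^ 2 * (-8 * t ^ 3) / (t ^ 2 + 1) ^ 3 with hg1
  set g2 : ℝ → ℝ := fun t => π ^ 2 * (-24 * t ^ 2 + 24 * t ^ 4) / (t ^ 2 + 1) ^ 4 with hg2
  set g3 : ℝ → ℝ := fun t => π ^ 2 * (-48 * t + 240 * t ^ 3 - 96 * t ^ 5) / (t ^ 2 + 1) ^ 5
    with hg3
  have hne : ∀ t : ℝ, (t ^ 2 + 1) ≠ 0 := fun t => by positivity
  have H1 : ∀ t : ℝ, HasDerivAt (fun t => π ^ 2 * (2 + 4 * t ^ 2) / (t ^ 2 + 1) ^ 2)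
      (g1 t) t := by
    intro t
    have hp : HasDerivAt (fun t : ℝ => π ^ 2 * (2 + 4 * t ^ 2)) (π ^ 2 * (4 * (2 * t))) t := by
      have := (((hasDerivAt_pow 2 t).const_mul (4 : ℝ)).const_add 2).const_mul (π ^ 2)
      simpa using this
    have hd := (hb t).fun_pow 2
    have := hp.fun_div hd (by positivity)
    refine this.congr_deriv ?_
    rw [hg1]
    field_simp
    ring
  have H2 : ∀ t : ℝ, HasDerivAt g1 (g2 t) t := by
    intro t
    have hp : HasDerivAt (fun t : ℝ => π ^ 2 * (-8 * t ^ 3)) (π ^ 2 * (-8 * (3 * t ^ 2))) t := by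
      have := ((hasDerivAt_pow 3 t).const_mul (-8 : ℝ)).const_mul (π ^ 2)
      simpa [mul_assoc] using this
    have hd := (hb t).fun_pow 3
    have := hp.fun_div hd (by positivity)
    refine this.congr_deriv ?_
    rw [hg2]
    field_simp
    ring
  have H3 : ∀ t : ℝ, HasDerivAt g2 (g3 t) t := by
    intro t
    have hp : HasDerivAt (fun t : ℝ => π ^ 2 * (-24 * t ^ 2 + 24 * t ^ 4))
        (π ^ 2 * (-24 * (2 * t) + 24 * (4 * t ^ 3))) t := by
      have := (((hasDerivAt_pow 2 t).const_mul (-24 : ℝ)).add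
        ((hasDerivAt_pow 4 t).const_mul (24 : ℝ))).const_mul (π ^ 2)
      simpa [mul_assoc] using this
    have hd := (hb t).fun_pow 4
    have := hp.fun_div hd (by positivity)
    refine this.congr_deriv ?_
    rw [hg3]
    field_simp
    ring
  have H4 : HasDerivAt g3 (-48 * π ^ 2) 0 := by
    have hp : HasDerivAt (fun t : ℝ => π ^ 2 * (-48 * t + 240 * t ^ 3 - 96 * t ^ 5))
        (π ^ 2 * (-48 * 1 + 240 * (3 * (0:ℝ) ^ 2) - 96 * (5 * (0:ℝ) ^ 4))) 0 := by
      have := ((((hasDerivAt_pow 1 (0:ℝ)).const_mul (-48 : ℝ)).add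
        ((hasDerivAt_pow 3 (0:ℝ)).const_mul (240 : ℝ))).sub
        ((hasDerivAt_pow 5 (0:ℝ)).const_mul (96 : ℝ))).const_mul (π ^ 2)
      simpa [mul_assoc, sub_eq_add_neg, pow_one] using this
    have hd := (hb 0).fun_pow 5
    have := hp.fun_div hd (by positivity)
    refine this.congr_deriv ?_
    norm_num
    ring
  have d1 : deriv (fun t => π ^ 2 * (2 + 4 * t ^ 2) / (t ^ 2 + 1) ^ 2) = g1 :=
    funext fun t => (H1 t).deriv
  have d2 : deriv g1 = g2 := funext fun t => (H2 t).deriv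
  have d3 : deriv g2 = g3 := funext fun t => (H3 t).deriv
  have e1 : iteratedDeriv 1 (fun t => π ^ 2 * (2 + 4 * t ^ 2) / (t ^ 2 + 1) ^ 2) = g1 := by
    rw [iteratedDeriv_one, d1]
  have e2 : iteratedDeriv 2 (fun t => π ^ 2 * (2 + 4 * t ^ 2) / (t ^ 2 + 1) ^ 2) = g2 := by
    show iteratedDeriv (1+1) _ = _
    rw [iteratedDeriv_succ, e1, d2]
  have e3 : iteratedDeriv 3 (fun t => π ^ 2 * (2 + 4 * t ^ 2) / (t ^ 2 + 1) ^ 2) = g3 := by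
    show iteratedDeriv (2+1) _ = _
    rw [iteratedDeriv_succ, e2, d3]
  refine ⟨?_, ?_, ?_, ?_, by nlinarith [pi_pos], ?_⟩
  · rw [e1, hg1]; norm_num
  · rw [e2, hg2]; norm_num
  · rw [e3, hg3]; norm_num
  · show iteratedDeriv (3+1) _ 0 = _
    rw [iteratedDeriv_succ, e3, H4.deriv]
  · apply Filter.Eventually.of_forall
    intro t
    simp only
    rw [div_le_div_iff₀ (by positivity) (by positivity)]
    nlinarith [sq_nonneg t, sq_nonneg (t^2), pi_pos, sq_nonneg π]
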